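/- Let σ: ℝ → ℝ be the ReLU activation σ(x) = max{x,0}. Then for any R ∈ ℕ and any a ≥ 1 there exists a feedforward ReLU network f̂_{mult} ∈ F(R,18) whose weights satisfy ‖v_{f̂_{mult}}‖_∞ ≤ 4·a², (v_{f̂_{mult}})^{(R)}_{1,0} = 0 (no offset in the output layer), and ‖(v_{f̂_{mult}})^{(0)}‖_∞ ≤ 1, such that |f̂_{mult}(x,y) − x·y| ≤ 2·a²·4^{−R} for all x,y ∈ [−a,a]. -/

import Mathlib

open Finset

noncomputable section

/-- Output `g_i^{(l)}(x)` of neuron `i` in layer `l` of a feedforward ReLU network with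
input dimension `d` (coordinates `x 1, …, x d`), `r` neurons per hidden layer and
weights `v l i j = v_{i,j}^{(l)}`. -/
def fnnNeuron (d r : ℕ) (v : ℕ → ℕ → ℕ → ℝ) (x : ℕ → ℝ) : ℕ → ℕ → ℝ
  | 0, j => x j
  | (l + 1), i =>
      max 0 (v l i 0 +
        ∑ j ∈ Finset.Icc 1 (if l = 0 then d else r), v l i j * fnnNeuron d r v x l j)

/-- Output of the feedforward ReLU network with `L` hidden layers of `r` neurons each,
input dimension `d` and weight vector `v` (the class `F(L,r)`). -/
def fnnEval (d r L : ℕ) (v : ℕ → ℕ → ℕ → ℝ) (x : ℕ → ℝ) : ℝ :=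
  v L 1 0 + ∑ i ∈ Finset.Icc 1 r, v L 1 i * fnnNeuron d r v x L i

/-- The indices `(l, i, j)` of the weights `v_{i,j}^{(l)}` actually used by a network
in `F(L,r)` with input dimension `d`. -/
def RelW (d r L : ℕ) (l i j : ℕ) : Prop :=
  (l < L ∧ 1 ≤ i ∧ i ≤ r ∧ j ≤ (if l = 0 then d else r)) ∨
    (l = L ∧ i = 1 ∧ j ≤ (if L = 0 then d else r))

/-- Supremum of `|v l i j|` over all indices satisfying the predicate `Pred`
(e.g. the supremum norm of (part of) a weight vector). -/
def wsup (Pred : ℕ → ℕ → ℕ → Prop) (v : ℕ → ℕ → ℕ → ℝ) : ℝ :=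
  sSup {y : ℝ | ∃ l i j, Pred l i j ∧ y = |v l i j|}


def gg (z : ℝ) : ℝ := 2 * max 0 z - 4 * max 0 (z - 1/2) + 2 * max 0 (z - 1)

def giter : ℕ → ℝ → ℝ
  | 0, z => z
  | (m+1), z => gg (giter m z)

def fm (m : ℕ) (z : ℝ) : ℝ := z - ∑ k ∈ Finset.Icc 1 m, giter k z / 4^k

lemma gg_cases {z : ℝ} (h : z ∈ Set.Icc (0:ℝ) 1) :
    (z ≤ 1/2 ∧ gg z = 2*z) ∨ (1/2 ≤ z ∧ gg z = 2 - 2*z) := by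
  obtain ⟨h0, h1⟩ := h
  rcases le_total z (1/2) with h2 | h2
  · left
    refine ⟨h2, ?_⟩
    unfold gg
    rw [max_eq_right h0, max_eq_left (by linarith), max_eq_left (by linarith)]
    ring
  · right
    refine ⟨h2, ?_⟩
    unfold gg
    rw [max_eq_right h0, max_eq_right (by linarith), max_eq_left (by linarith)]
    ring

lemma gg_mem {z : ℝ} (h : z ∈ Set.Icc (0:ℝ) 1) : gg z ∈ Set.Icc (0:ℝ) 1 := by
  obtain ⟨h0, h1⟩ := h
  rcases gg_cases ⟨h0, h1⟩ with ⟨h2, h3⟩ | ⟨h2, h3⟩ <;> rw [h3] <;>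
    constructor <;> linarith

lemma s_step {z : ℝ} (h : z ∈ Set.Icc (0:ℝ) 1) :
    z - z^2 = gg z / 4 + (gg z - (gg z)^2) / 4 := by
  rcases gg_cases h with ⟨h2, h3⟩ | ⟨h2, h3⟩ <;> rw [h3] <;> ring

lemma giter_mem {z : ℝ} (h : z ∈ Set.Icc (0:ℝ) 1) (m : ℕ) : giter m z ∈ Set.Icc (0:ℝ) 1 := by
  induction m with
  | zero => exact h
  | succ n ih => exact gg_mem ih

lemma fm_succ (m : ℕ) (z : ℝ) : fm (m+1) z = fm m z - giter (m+1) z / 4^(m+1) := by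
  unfold fm
  rw [Finset.sum_Icc_succ_top (by omega)]
  ring

lemma fm_err {z : ℝ} (h : z ∈ Set.Icc (0:ℝ) 1) (m : ℕ) :
    fm m z - z^2 = (giter m z - (giter m z)^2) / 4^m := by
  induction m with
  | zero => simp [fm, giter]
  | succ n ih =>
      rw [fm_succ]
      have h1 := s_step (giter_mem h n)
      have : giter (n+1) z = gg (giter n z) := rfl
      rw [this]
      linear_combination ih + (1/(4:ℝ)^n) * h1 - (1/(4*(4:ℝ)^n)) * h1 * 0

lemma s_bounds {t : ℝ} (h : t ∈ Set.Icc (0:ℝ) 1) : 0 ≤ t - t^2 ∧ t - t^2 ≤ 1/4 := by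
  obtain ⟨h0, h1⟩ := h
  constructor
  · nlinarith
  · nlinarith [sq_nonneg (2*t - 1)]

lemma fm_err_bounds {z : ℝ} (h : z ∈ Set.Icc (0:ℝ) 1) (m : ℕ) :
    0 ≤ fm m z - z^2 ∧ fm m z - z^2 ≤ (1/4) * (1/4)^m := by
  rw [fm_err h m]
  obtain ⟨l, u⟩ := s_bounds (giter_mem h m)
  have h4 : (0:ℝ) < 4^m := by positivity
  constructor
  · positivity
  · rw [div_le_iff₀ h4]
    calc giter m z - (giter m z)^2 ≤ 1/4 := u
    _ = (1/4) * (1/4)^m * 4^m := by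
        rw [one_div, inv_pow, mul_assoc, inv_mul_cancel₀ (ne_of_gt h4), mul_one]

lemma fm_nonneg {z : ℝ} (h : z ∈ Set.Icc (0:ℝ) 1) (m : ℕ) : 0 ≤ fm m z := by
  have := (fm_err_bounds h m).1
  nlinarith [sq_nonneg z]

lemma gg_eq {t : ℝ} (h : t ∈ Set.Icc (0:ℝ) 1) :
    2*t - 4 * max 0 (t - 1/2) + 2 * max 0 (t - 1) = gg t := by
  unfold gg
  rw [max_eq_right h.1]

lemma sumIccTop (n : ℕ) (f : ℕ → ℝ) :
    ∑ j ∈ Finset.Icc 1 (n+1), f j = (∑ j ∈ Finset.Icc 1 n, f j) + f (n+1) :=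
  Finset.sum_Icc_succ_top (by omega) f

lemma sum18 (f : ℕ → ℝ) : ∑ j ∈ Finset.Icc 1 18, f j =
    f 1 + f 2 + f 3 + f 4 + f 5 + f 6 + f 7 + f 8 + f 9 + f 10 + f 11 + f 12
      + f 13 + f 14 + f 15 + f 16 + f 17 + f 18 := by
  rw [show (18:ℕ) = 17+1 from rfl, sumIccTop, show (17:ℕ) = 16+1 from rfl, sumIccTop,
    show (16:ℕ) = 15+1 from rfl, sumIccTop, show (15:ℕ) = 14+1 from rfl, sumIccTop,
    show (14:ℕ) = 13+1 from rfl, sumIccTop, show (13:ℕ) = 12+1 from rfl, sumIccTop,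
    show (12:ℕ) = 11+1 from rfl, sumIccTop, show (11:ℕ) = 10+1 from rfl, sumIccTop,
    show (10:ℕ) = 9+1 from rfl, sumIccTop, show (9:ℕ) = 8+1 from rfl, sumIccTop,
    show (8:ℕ) = 7+1 from rfl, sumIccTop, show (7:ℕ) = 6+1 from rfl, sumIccTop,
    show (6:ℕ) = 5+1 from rfl, sumIccTop, show (5:ℕ) = 4+1 from rfl, sumIccTop,
    show (4:ℕ) = 3+1 from rfl, sumIccTop, show (3:ℕ) = 2+1 from rfl, sumIccTop,
    show (2:ℕ) = 1+1 from rfl, sumIccTop, Finset.Icc_self, Finset.sum_singleton]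

lemma sum2 (f : ℕ → ℝ) : ∑ j ∈ Finset.Icc 1 2, f j = f 1 + f 2 := by
  rw [show (2:ℕ) = 1+1 from rfl, sumIccTop, Finset.Icc_self, Finset.sum_singleton]

def WA (a : ℝ) (i j : ℕ) : ℝ :=
  if i = 1 then (if j = 1 then 1/(2*a) else if j = 2 then 1/(2*a) else 0)
  else if i = 2 then (if j = 1 then -(1/(2*a)) else if j = 2 then -(1/(2*a)) else 0)
  else if i = 3 then (if j = 1 then 1/(2*a) else if j = 2 then -(1/(2*a)) else 0)
  else if i = 4 then (if j = 1 then -(1/(2*a)) else if j = 2 then 1/(2*a) else 0)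
  else 0

def WB (i j : ℕ) : ℝ :=
  if i = 1 ∨ i = 2 then (if j = 1 ∨ j = 2 then 1 else 0)
  else if i = 3 then (if j = 0 then -(1/2) else if j = 1 ∨ j = 2 then 1 else 0)
  else if i = 4 then (if j = 0 then -1 else if j = 1 ∨ j = 2 then 1 else 0)
  else if i = 5 ∨ i = 6 then (if j = 3 ∨ j = 4 then 1 else 0)
  else if i = 7 then (if j = 0 then -(1/2) else if j = 3 ∨ j = 4 then 1 else 0)
  else if i = 8 then (if j = 0 then -1 else if j = 3 ∨ j = 4 then 1 else 0)
  else 0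

def WC (l : ℕ) (i j : ℕ) : ℝ :=
  if i = 1 then (if j = 1 then 1 else if j = 2 then -(2*(1/4:ℝ)^(l-1)) else
    if j = 3 then 4*(1/4:ℝ)^(l-1) else if j = 4 then -(2*(1/4:ℝ)^(l-1)) else 0)
  else if i = 2 then (if j = 2 then 2 else if j = 3 then -4 else if j = 4 then 2 else 0)
  else if i = 3 then (if j = 0 then -(1/2) else if j = 2 then 2 else if j = 3 then -4 else if j = 4 then 2 else 0)
  else if i = 4 then (if j = 0 then -1 else if j = 2 then 2 else if j = 3 then -4 else if j = 4 then 2 else 0)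
  else if i = 5 then (if j = 5 then 1 else if j = 6 then -(2*(1/4:ℝ)^(l-1)) else
    if j = 7 then 4*(1/4:ℝ)^(l-1) else if j = 8 then -(2*(1/4:ℝ)^(l-1)) else 0)
  else if i = 6 then (if j = 6 then 2 else if j = 7 then -4 else if j = 8 then 2 else 0)
  else if i = 7 then (if j = 0 then -(1/2) else if j = 6 then 2 else if j = 7 then -4 else if j = 8 then 2 else 0)
  else if i = 8 then (if j = 0 then -1 else if j = 6 then 2 else if j = 7 then -4 else if j = 8 then 2 else 0)
  else 0

def WD (R : ℕ) (a : ℝ) (i j : ℕ) : ℝ :=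
  if i = 1 then
    (if j = 1 then a^2 else if j = 2 then -(2*a^2*(1/4:ℝ)^(R-1)) else
     if j = 3 then 4*a^2*(1/4:ℝ)^(R-1) else if j = 4 then -(2*a^2*(1/4:ℝ)^(R-1)) else
     if j = 5 then -(a^2) else if j = 6 then 2*a^2*(1/4:ℝ)^(R-1) else
     if j = 7 then -(4*a^2*(1/4:ℝ)^(R-1)) else if j = 8 then 2*a^2*(1/4:ℝ)^(R-1) else 0)
  else 0

def WE (a : ℝ) (i j : ℕ) : ℝ :=
  if i = 1 then (if j = 1 ∨ j = 2 then a^2 else if j = 3 ∨ j = 4 then -(a^2) else 0) else 0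

def V (R : ℕ) (a : ℝ) (l i j : ℕ) : ℝ :=
  if l = 0 then WA a i j
  else if l = R then (if R = 1 then WE a i j else WD R a i j)
  else if l = 1 then WB i j
  else WC l i j


lemma abs_ite_le {c : Prop} [Decidable c] {x y B : ℝ} (hx : |x| ≤ B) (hy : |y| ≤ B) :
    |if c then x else y| ≤ B := by
  split_ifs <;> assumption

lemma WA_bound {a : ℝ} (ha : 1 ≤ a) (i j : ℕ) : |WA a i j| ≤ 1 := by
  have h0 : (0:ℝ) < a := by linarith
  have h1 : 1/(2*a) ≤ 1 := by rw [div_le_one (by linarith)]; linarith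
  have h2 : (0:ℝ) ≤ 1/(2*a) := by positivity
  unfold WA
  repeat' apply abs_ite_le
  all_goals rw [abs_le]; constructor <;> linarith

lemma WB_bound (i j : ℕ) : |WB i j| ≤ 1 := by
  unfold WB
  repeat' apply abs_ite_le
  all_goals rw [abs_le]; constructor <;> norm_num

lemma pow_quarter_le_one (n : ℕ) : ((1:ℝ)/4)^n ≤ 1 :=
  pow_le_one₀ (by norm_num) (by norm_num)

lemma pow_quarter_pos (n : ℕ) : (0:ℝ) < ((1:ℝ)/4)^n := by positivity

set_option maxHeartbeats 1000000 in
lemma WC_bound (l i j : ℕ) : |WC l i j| ≤ 4 := by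
  have h1 := pow_quarter_le_one (l-1)
  have h2 := pow_quarter_pos (l-1)
  unfold WC
  repeat' apply abs_ite_le
  all_goals rw [abs_le]; constructor <;> linarith

set_option maxHeartbeats 1000000 in
lemma WD_bound {a : ℝ} (ha : 1 ≤ a) (R i j : ℕ) : |WD R a i j| ≤ 4*a^2 := by
  have h0 : (1:ℝ) ≤ a^2 := by nlinarith
  have h3 : a^2*((1/4:ℝ)^(R-1)) ≤ a^2 := mul_le_of_le_one_right (by positivity) (pow_quarter_le_one (R-1))
  have h4 : (0:ℝ) < a^2*((1/4:ℝ)^(R-1)) := by positivity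
  unfold WD
  repeat' apply abs_ite_le
  all_goals rw [abs_le]; constructor <;> linarith

lemma WE_bound {a : ℝ} (ha : 1 ≤ a) (i j : ℕ) : |WE a i j| ≤ 4*a^2 := by
  have h0 : (1:ℝ) ≤ a^2 := by nlinarith
  unfold WE
  repeat' apply abs_ite_le
  all_goals rw [abs_le]; constructor <;> nlinarith

lemma V_bound {a : ℝ} (ha : 1 ≤ a) (R l i j : ℕ) : |V R a l i j| ≤ 4*a^2 := by
  have h0 : (1:ℝ) ≤ a^2 := by nlinarith
  unfold V
  split_ifs
  · linarith [WA_bound ha i j]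
  · exact WE_bound ha i j
  · exact WD_bound ha R i j
  · linarith [WB_bound i j]
  · linarith [WC_bound l i j, h0]

def Xf (x y : ℝ) : ℕ → ℝ := fun j => if j = 1 then x else if j = 2 then y else 0

lemma max_add_abs (u : ℝ) : max 0 u + max 0 (-u) = |u| := by
  rcases le_total 0 u with h | h
  · rw [max_eq_right h, max_eq_left (by linarith), abs_of_nonneg h]; ring
  · rw [max_eq_left h, max_eq_right (by linarith), abs_of_nonpos h]; ring

lemma WA_zero (a : ℝ) {i : ℕ} (hi : 5 ≤ i) (j : ℕ) : WA a i j = 0 := by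
  unfold WA
  rw [if_neg (by omega), if_neg (by omega), if_neg (by omega), if_neg (by omega)]

lemma layer1 (R : ℕ) (a x y : ℝ) :
    (fnnNeuron 2 18 (V R a) (Xf x y) 1 1 = max 0 ((x+y)/(2*a)) ∧
     fnnNeuron 2 18 (V R a) (Xf x y) 1 2 = max 0 (-((x+y)/(2*a))) ∧
     fnnNeuron 2 18 (V R a) (Xf x y) 1 3 = max 0 ((x-y)/(2*a)) ∧
     fnnNeuron 2 18 (V R a) (Xf x y) 1 4 = max 0 (-((x-y)/(2*a)))) ∧
    (∀ i, 5 ≤ i → fnnNeuron 2 18 (V R a) (Xf x y) 1 i = 0) := by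
  have hV : ∀ i j, V R a 0 i j = WA a i j := by
    intro i j; unfold V; simp
  constructor
  · refine ⟨?_, ?_, ?_, ?_⟩ <;>
    · show max 0 (V R a 0 _ 0 + ∑ j ∈ Finset.Icc 1 (if (0:ℕ) = 0 then 2 else 18),
        V R a 0 _ j * fnnNeuron 2 18 (V R a) (Xf x y) 0 j) = _
      rw [if_pos rfl, sum2]
      simp only [hV, fnnNeuron, Xf]
      norm_num [WA]
      congr 1
      ring
  · intro i hi
    show max 0 (V R a 0 i 0 + ∑ j ∈ Finset.Icc 1 (if (0:ℕ) = 0 then 2 else 18),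
        V R a 0 i j * fnnNeuron 2 18 (V R a) (Xf x y) 0 j) = 0
    rw [if_pos rfl, sum2]
    simp [hV, WA_zero a hi]

def HL (N : ℕ → ℝ) (P t Q s : ℝ) : Prop :=
  N 1 = P ∧ N 2 = t ∧ N 3 = max 0 (t - 1/2) ∧ N 4 = max 0 (t - 1) ∧
  N 5 = Q ∧ N 6 = s ∧ N 7 = max 0 (s - 1/2) ∧ N 8 = max 0 (s - 1) ∧
  ∀ i, 9 ≤ i → N i = 0

lemma WB_zero {i : ℕ} (hi : 9 ≤ i) (j : ℕ) : WB i j = 0 := by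
  unfold WB
  rw [if_neg (by omega), if_neg (by omega), if_neg (by omega), if_neg (by omega),
    if_neg (by omega), if_neg (by omega)]

lemma WC_zero (l : ℕ) {i : ℕ} (hi : 9 ≤ i) (j : ℕ) : WC l i j = 0 := by
  unfold WC
  rw [if_neg (by omega), if_neg (by omega), if_neg (by omega), if_neg (by omega),
    if_neg (by omega), if_neg (by omega), if_neg (by omega), if_neg (by omega)]

lemma abs_mem_Icc {z a : ℝ} (ha : 1 ≤ a) (hz : |z| ≤ 2*a) : |z/(2*a)| ∈ Set.Icc (0:ℝ) 1 := by
  have h0 : (0:ℝ) < 2*a := by linarith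
  constructor
  · positivity
  · rw [abs_div, abs_of_pos h0, div_le_one h0]; exact hz

lemma fm_zero (z : ℝ) : fm 0 z = z := by simp [fm]

lemma giter_succ (m : ℕ) (z : ℝ) : giter (m+1) z = gg (giter m z) := rfl

set_option maxHeartbeats 2000000 in
lemma layers (R : ℕ) (a x y : ℝ) (ha : 1 ≤ a)
    (hu : |(x+y)/(2*a)| ∈ Set.Icc (0:ℝ) 1) (hw : |(x-y)/(2*a)| ∈ Set.Icc (0:ℝ) 1) :
    ∀ m, m + 2 ≤ R →
      HL (fnnNeuron 2 18 (V R a) (Xf x y) (m+2))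
        (fm m (|(x+y)/(2*a)|)) (giter m (|(x+y)/(2*a)|))
        (fm m (|(x-y)/(2*a)|)) (giter m (|(x-y)/(2*a)|)) := by
  intro m
  induction m with
  | zero =>
    intro hm
    obtain ⟨⟨e1, e2, e3, e4⟩, ez⟩ := layer1 R a x y
    have hV : ∀ i j, V R a 1 i j = WB i j := by
      intro i j; unfold V; rw [if_neg (by omega), if_neg (by omega), if_pos rfl]
    have sums : ∀ i, fnnNeuron 2 18 (V R a) (Xf x y) 2 i =
        max 0 (WB i 0 + (WB i 1 * max 0 ((x+y)/(2*a)) + WB i 2 * max 0 (-((x+y)/(2*a)))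
          + WB i 3 * max 0 ((x-y)/(2*a)) + WB i 4 * max 0 (-((x-y)/(2*a))))) := by
      intro i
      show max 0 (V R a 1 i 0 + ∑ j ∈ Finset.Icc 1 18,
        V R a 1 i j * fnnNeuron 2 18 (V R a) (Xf x y) 1 j) = _
      rw [sum18, e1, e2, e3, e4, ez 5 (by omega), ez 6 (by omega), ez 7 (by omega),
        ez 8 (by omega), ez 9 (by omega), ez 10 (by omega), ez 11 (by omega), ez 12 (by omega),
        ez 13 (by omega), ez 14 (by omega), ez 15 (by omega), ez 16 (by omega), ez 17 (by omega),
        ez 18 (by omega)]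
      simp only [hV]
      congr 1
      ring
    refine ⟨?_, ?_, ?_, ?_, ?_, ?_, ?_, ?_, ?_⟩
    · rw [sums 1, show WB 1 0 + (WB 1 1 * max 0 ((x+y)/(2*a)) + WB 1 2 * max 0 (-((x+y)/(2*a)))
          + WB 1 3 * max 0 ((x-y)/(2*a)) + WB 1 4 * max 0 (-((x-y)/(2*a))))
          = |(x+y)/(2*a)| from by rw [← max_add_abs]; norm_num [WB],
        max_eq_right (abs_nonneg _), fm_zero]
    · rw [sums 2, show WB 2 0 + (WB 2 1 * max 0 ((x+y)/(2*a)) + WB 2 2 * max 0 (-((x+y)/(2*a)))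
          + WB 2 3 * max 0 ((x-y)/(2*a)) + WB 2 4 * max 0 (-((x-y)/(2*a))))
          = |(x+y)/(2*a)| from by rw [← max_add_abs]; norm_num [WB],
        max_eq_right (abs_nonneg _)]
      rfl
    · rw [sums 3]
      congr 1
      rw [← max_add_abs]
      norm_num [WB, giter]
      ring
    · rw [sums 4]
      congr 1
      rw [← max_add_abs]
      norm_num [WB, giter]
      ring
    · rw [sums 5, show WB 5 0 + (WB 5 1 * max 0 ((x+y)/(2*a)) + WB 5 2 * max 0 (-((x+y)/(2*a)))
          + WB 5 3 * max 0 ((x-y)/(2*a)) + WB 5 4 * max 0 (-((x-y)/(2*a))))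
          = |(x-y)/(2*a)| from by rw [← max_add_abs]; norm_num [WB],
        max_eq_right (abs_nonneg _), fm_zero]
    · rw [sums 6, show WB 6 0 + (WB 6 1 * max 0 ((x+y)/(2*a)) + WB 6 2 * max 0 (-((x+y)/(2*a)))
          + WB 6 3 * max 0 ((x-y)/(2*a)) + WB 6 4 * max 0 (-((x-y)/(2*a))))
          = |(x-y)/(2*a)| from by rw [← max_add_abs]; norm_num [WB],
        max_eq_right (abs_nonneg _)]
      rfl
    · rw [sums 7]
      congr 1
      rw [← max_add_abs]
      norm_num [WB, giter]
      ring
    · rw [sums 8]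
      congr 1
      rw [← max_add_abs]
      norm_num [WB, giter]
      ring
    · intro i hi
      rw [sums i]
      simp [WB_zero hi]
  | succ n ih =>
    intro hm
    obtain ⟨e1, e2, e3, e4, e5, e6, e7, e8, ez⟩ := ih (by omega)
    set u := |(x+y)/(2*a)| with hu_def
    set w := |(x-y)/(2*a)| with hw_def
    have tu : giter n u ∈ Set.Icc (0:ℝ) 1 := giter_mem hu n
    have tw : giter n w ∈ Set.Icc (0:ℝ) 1 := giter_mem hw n
    have hV : ∀ i j, V R a (n+2) i j = WC (n+2) i j := by
      intro i j; unfold V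
      rw [if_neg (by omega), if_neg (by omega), if_neg (by omega)]
    have sums : ∀ i, fnnNeuron 2 18 (V R a) (Xf x y) (n+3) i =
        max 0 (WC (n+2) i 0 + (WC (n+2) i 1 * fm n u + WC (n+2) i 2 * giter n u
          + WC (n+2) i 3 * max 0 (giter n u - 1/2) + WC (n+2) i 4 * max 0 (giter n u - 1)
          + WC (n+2) i 5 * fm n w + WC (n+2) i 6 * giter n w
          + WC (n+2) i 7 * max 0 (giter n w - 1/2) + WC (n+2) i 8 * max 0 (giter n w - 1))) := by
      intro i
      show max 0 (V R a (n+2) i 0 + ∑ j ∈ Finset.Icc 1 18,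
        V R a (n+2) i j * fnnNeuron 2 18 (V R a) (Xf x y) (n+2) j) = _
      rw [sum18, e1, e2, e3, e4, e5, e6, e7, e8, ez 9 (by omega), ez 10 (by omega),
        ez 11 (by omega), ez 12 (by omega), ez 13 (by omega), ez 14 (by omega),
        ez 15 (by omega), ez 16 (by omega), ez 17 (by omega), ez 18 (by omega)]
      simp only [hV]
      congr 1
      ring
    refine ⟨?_, ?_, ?_, ?_, ?_, ?_, ?_, ?_, ?_⟩
    · rw [sums 1, show WC (n+2) 1 0 + (WC (n+2) 1 1 * fm n u + WC (n+2) 1 2 * giter n u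
          + WC (n+2) 1 3 * max 0 (giter n u - 1/2) + WC (n+2) 1 4 * max 0 (giter n u - 1)
          + WC (n+2) 1 5 * fm n w + WC (n+2) 1 6 * giter n w
          + WC (n+2) 1 7 * max 0 (giter n w - 1/2) + WC (n+2) 1 8 * max 0 (giter n w - 1))
          = fm (n+1) u from by
            rw [fm_succ, giter_succ, ← gg_eq tu]
            norm_num [WC, show n+2-1 = n+1 from rfl]
            simp only [one_div, inv_pow]
            ring,
        max_eq_right (fm_nonneg hu (n+1))]
    · rw [sums 2, show WC (n+2) 2 0 + (WC (n+2) 2 1 * fm n u + WC (n+2) 2 2 * giter n u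
          + WC (n+2) 2 3 * max 0 (giter n u - 1/2) + WC (n+2) 2 4 * max 0 (giter n u - 1)
          + WC (n+2) 2 5 * fm n w + WC (n+2) 2 6 * giter n w
          + WC (n+2) 2 7 * max 0 (giter n w - 1/2) + WC (n+2) 2 8 * max 0 (giter n w - 1))
          = giter (n+1) u from by
            rw [giter_succ, ← gg_eq tu]
            norm_num [WC]
            ring,
        max_eq_right (giter_mem hu (n+1)).1]
    · rw [sums 3]
      congr 1
      rw [giter_succ, ← gg_eq tu]
      norm_num [WC]
      ring
    · rw [sums 4]
      congr 1
      rw [giter_succ, ← gg_eq tu]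
      norm_num [WC]
      ring
    · rw [sums 5, show WC (n+2) 5 0 + (WC (n+2) 5 1 * fm n u + WC (n+2) 5 2 * giter n u
          + WC (n+2) 5 3 * max 0 (giter n u - 1/2) + WC (n+2) 5 4 * max 0 (giter n u - 1)
          + WC (n+2) 5 5 * fm n w + WC (n+2) 5 6 * giter n w
          + WC (n+2) 5 7 * max 0 (giter n w - 1/2) + WC (n+2) 5 8 * max 0 (giter n w - 1))
          = fm (n+1) w from by
            rw [fm_succ, giter_succ, ← gg_eq tw]
            norm_num [WC, show n+2-1 = n+1 from rfl]
            simp only [one_div, inv_pow]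
            ring,
        max_eq_right (fm_nonneg hw (n+1))]
    · rw [sums 6, show WC (n+2) 6 0 + (WC (n+2) 6 1 * fm n u + WC (n+2) 6 2 * giter n u
          + WC (n+2) 6 3 * max 0 (giter n u - 1/2) + WC (n+2) 6 4 * max 0 (giter n u - 1)
          + WC (n+2) 6 5 * fm n w + WC (n+2) 6 6 * giter n w
          + WC (n+2) 6 7 * max 0 (giter n w - 1/2) + WC (n+2) 6 8 * max 0 (giter n w - 1))
          = giter (n+1) w from by
            rw [giter_succ, ← gg_eq tw]
            norm_num [WC]
            ring,
        max_eq_right (giter_mem hw (n+1)).1]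
    · rw [sums 7]
      congr 1
      rw [giter_succ, ← gg_eq tw]
      norm_num [WC]
      ring
    · rw [sums 8]
      congr 1
      rw [giter_succ, ← gg_eq tw]
      norm_num [WC]
      ring
    · intro i hi
      rw [sums i]
      simp [WC_zero _ hi]

lemma quarter_pow (R : ℕ) : (4:ℝ) ^ (-(R:ℤ)) = ((1:ℝ)/4)^R := by
  rw [zpow_neg, zpow_natCast, one_div, inv_pow]

set_option maxHeartbeats 2000000 in
theorem statement_18_aux (R : ℕ) (hR : 0 < R) (a : ℝ) (ha : 1 ≤ a) :
    ∃ v : ℕ → ℕ → ℕ → ℝ,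
      wsup (RelW 2 18 R) v ≤ 4 * a ^ 2 ∧
      v R 1 0 = 0 ∧
      wsup (fun l i j => RelW 2 18 R l i j ∧ l = 0) v ≤ 1 ∧
      ∀ x ∈ Set.Icc (-a) a, ∀ y ∈ Set.Icc (-a) a,
        |fnnEval 2 18 R v (fun j => if j = 1 then x else if j = 2 then y else 0) - x * y|
          ≤ 2 * a ^ 2 * (4 : ℝ) ^ (-(R : ℤ)) := by
  have ha0 : (0:ℝ) < a := by linarith
  have ha2 : (1:ℝ) ≤ a^2 := by nlinarith
  refine ⟨V R a, ?_, ?_, ?_, ?_⟩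
  · apply Real.sSup_le
    · rintro y ⟨l, i, j, -, rfl⟩
      exact V_bound ha R l i j
    · nlinarith
  · unfold V
    rw [if_neg (by omega), if_pos rfl]
    rcases eq_or_ne R 1 with h | h
    · rw [if_pos h]; norm_num [WE]
    · rw [if_neg h]; norm_num [WD]
  · apply Real.sSup_le
    · rintro z ⟨l, i, j, ⟨-, rfl⟩, rfl⟩
      have : V R a 0 i j = WA a i j := by unfold V; rw [if_pos rfl]
      rw [this]
      exact WA_bound ha i j
    · norm_num
  · intro x hx y hy
    rw [Set.mem_Icc, ← abs_le] at hx hy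
    have hu : |(x+y)/(2*a)| ∈ Set.Icc (0:ℝ) 1 :=
      abs_mem_Icc ha (by calc |x+y| ≤ |x| + |y| := abs_add_le _ _
        _ ≤ 2*a := by linarith)
    have hw : |(x-y)/(2*a)| ∈ Set.Icc (0:ℝ) 1 :=
      abs_mem_Icc ha (by calc |x-y| ≤ |x| + |y| := abs_sub _ _
        _ ≤ 2*a := by linarith)
    have hxy : a^2 * (|(x+y)/(2*a)|^2 - |(x-y)/(2*a)|^2) = x*y := by
      rw [sq_abs, sq_abs]
      field_simp
      ring
    rw [quarter_pow]
    rcases eq_or_lt_of_le (show 1 ≤ R from hR) with h1 | h2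
    · -- R = 1
      obtain rfl : R = 1 := h1.symm
      obtain ⟨⟨e1, e2, e3, e4⟩, ez⟩ := layer1 1 a x y
      have hV : ∀ i, V 1 a 1 1 i = WE a 1 i := by
        intro i; unfold V; rw [if_neg (by omega), if_pos rfl, if_pos rfl]
      have hout : fnnEval 2 18 1 (V 1 a) (Xf x y) =
          a^2 * |(x+y)/(2*a)| - a^2 * |(x-y)/(2*a)| := by
        show V 1 a 1 1 0 + ∑ i ∈ Finset.Icc 1 18,
          V 1 a 1 1 i * fnnNeuron 2 18 (V 1 a) (Xf x y) 1 i = _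
        rw [sum18, e1, e2, e3, e4, ez 5 (by omega), ez 6 (by omega), ez 7 (by omega),
          ez 8 (by omega), ez 9 (by omega), ez 10 (by omega), ez 11 (by omega),
          ez 12 (by omega), ez 13 (by omega), ez 14 (by omega), ez 15 (by omega),
          ez 16 (by omega), ez 17 (by omega), ez 18 (by omega)]
        simp only [hV]
        rw [← max_add_abs ((x+y)/(2*a)), ← max_add_abs ((x-y)/(2*a))]
        norm_num [WE]
        ring
      show |fnnEval 2 18 1 (V 1 a) (Xf x y) - x*y| ≤ _
      rw [hout]
      obtain ⟨su1, su2⟩ := s_bounds hu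
      obtain ⟨sw1, sw2⟩ := s_bounds hw
      rw [abs_le]
      constructor <;>
        nlinarith [mul_le_mul_of_nonneg_left su2 (le_of_lt (by positivity : (0:ℝ) < a^2)),
          mul_le_mul_of_nonneg_left sw2 (le_of_lt (by positivity : (0:ℝ) < a^2)),
          mul_nonneg (sq_nonneg a) su1, mul_nonneg (sq_nonneg a) sw1]
    · -- R ≥ 2
      obtain ⟨m, rfl⟩ : ∃ m, R = m + 2 := ⟨R - 2, by omega⟩
      obtain ⟨e1, e2, e3, e4, e5, e6, e7, e8, ez⟩ := layers (m+2) a x y ha hu hw m le_rfl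
      set u := |(x+y)/(2*a)| with hu_def
      set w := |(x-y)/(2*a)| with hw_def
      have tu : giter m u ∈ Set.Icc (0:ℝ) 1 := giter_mem hu m
      have tw : giter m w ∈ Set.Icc (0:ℝ) 1 := giter_mem hw m
      have hV : ∀ i, V (m+2) a (m+2) 1 i = WD (m+2) a 1 i := by
        intro i; unfold V; rw [if_neg (by omega), if_pos rfl, if_neg (by omega)]
      have hout : fnnEval 2 18 (m+2) (V (m+2) a) (Xf x y) =
          a^2 * fm (m+1) u - a^2 * fm (m+1) w := by
        show V (m+2) a (m+2) 1 0 + ∑ i ∈ Finset.Icc 1 18,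
          V (m+2) a (m+2) 1 i * fnnNeuron 2 18 (V (m+2) a) (Xf x y) (m+2) i = _
        rw [sum18, e1, e2, e3, e4, e5, e6, e7, e8, ez 9 (by omega), ez 10 (by omega),
          ez 11 (by omega), ez 12 (by omega), ez 13 (by omega), ez 14 (by omega),
          ez 15 (by omega), ez 16 (by omega), ez 17 (by omega), ez 18 (by omega)]
        simp only [hV]
        rw [fm_succ m u, fm_succ m w, giter_succ, giter_succ, ← gg_eq tu, ← gg_eq tw]
        norm_num [WD, show m+2-1 = m+1 from rfl]
        simp only [one_div, inv_pow]
        ring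
      show |fnnEval 2 18 (m+2) (V (m+2) a) (Xf x y) - x*y| ≤ _
      rw [hout]
      obtain ⟨eu1, eu2⟩ := fm_err_bounds hu (m+1)
      obtain ⟨ew1, ew2⟩ := fm_err_bounds hw (m+1)
      have hq : ((1:ℝ)/4) * (1/4)^(m+1) = (1/4)^(m+2) := by ring
      rw [abs_le]
      constructor <;>
        nlinarith [mul_le_mul_of_nonneg_left eu2 (le_of_lt (by positivity : (0:ℝ) < a^2)),
          mul_le_mul_of_nonneg_left ew2 (le_of_lt (by positivity : (0:ℝ) < a^2)),
          mul_nonneg (sq_nonneg a) eu1, mul_nonneg (sq_nonneg a) ew1]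


/-- **Lemma (approximation of multiplication)**: for any `R ∈ ℕ` and `a ≥ 1` there is a
ReLU network `f̂_mult ∈ F(R, 18)` with `‖v‖_∞ ≤ 4a²`, no offset in the output layer
(`v_{1,0}^{(R)} = 0`) and `‖v^{(0)}‖_∞ ≤ 1`, such that
`|f̂_mult(x,y) - x·y| ≤ 2a² · 4^{-R}` for all `x, y ∈ [-a, a]`. -/
theorem statement_18 (R : ℕ) (hR : 0 < R) (a : ℝ) (ha : 1 ≤ a) :
    ∃ v : ℕ → ℕ → ℕ → ℝ,
      wsup (RelW 2 18 R) v ≤ 4 * a ^ 2 ∧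
      v R 1 0 = 0 ∧
      wsup (fun l i j => RelW 2 18 R l i j ∧ l = 0) v ≤ 1 ∧
      ∀ x ∈ Set.Icc (-a) a, ∀ y ∈ Set.Icc (-a) a,
        |fnnEval 2 18 R v (fun j => if j = 1 then x else if j = 2 then y else 0) - x * y|
          ≤ 2 * a ^ 2 * (4 : ℝ) ^ (-(R : ℤ)) := by
  exact statement_18_aux R hR a ha
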